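/- Let S = (N, M0) be a Petri net system such that for every potentially reachable marking M ∈ PR(S), the system (N, M) is live and reversible. Then the reverse system −S is live and reversible. -/

import Mathlib

open scoped Classical

structure PetriNet (P T : Type) where
  pre : P → T → ℕ
  post : T → P → ℕ

namespace PetriNet

variable {P T : Type}

def enabled (N : PetriNet P T) (M : P → ℕ) (t : T) : Prop :=
  ∀ p, N.pre p t ≤ M p

def fire (N : PetriNet P T) (M : P → ℕ) (t : T) : P → ℕ :=
  fun p => M p - N.pre p t + N.post t p

def feasible (N : PetriNet P T) : (P → ℕ) → List T → (P → ℕ) → Prop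
  | M, [], M' => M' = M
  | M, t :: σ, M' => N.enabled M t ∧ feasible N (N.fire M t) σ M'

def reachable (N : PetriNet P T) (M0 M : P → ℕ) : Prop :=
  ∃ σ : List T, N.feasible M0 σ M

def inc (N : PetriNet P T) (p : P) (t : T) : ℤ :=
  (N.post t p : ℤ) - (N.pre p t : ℤ)

def potReach [Fintype T] (N : PetriNet P T) (M0 M : P → ℕ) : Prop :=
  ∃ Y : T → ℕ, ∀ p, (M p : ℤ) = (M0 p : ℤ) + ∑ t, N.inc p t * (Y t : ℤ)

def live (N : PetriNet P T) (M0 : P → ℕ) : Prop :=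
  ∀ (t : T) (M : P → ℕ), N.reachable M0 M →
    ∃ M', N.reachable M M' ∧ N.enabled M' t

def bounded (N : PetriNet P T) (M0 : P → ℕ) : Prop :=
  ∃ k : ℕ, ∀ M : P → ℕ, N.reachable M0 M → ∀ p, M p ≤ k

def reversible (N : PetriNet P T) (M0 : P → ℕ) : Prop :=
  ∀ M : P → ℕ, N.reachable M0 M → N.reachable M M0

def rev (N : PetriNet P T) : PetriNet P T :=
  ⟨fun p t => N.post t p, fun t p => N.pre p t⟩

def propR (N : PetriNet P T) (M0 : P → ℕ) : Prop :=
  N.reversible M0 ∧ N.rev.reversible M0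

def placePre [Fintype T] (N : PetriNet P T) (p : P) : Finset T :=
  Finset.univ.filter fun t => 0 < N.post t p

def placePost [Fintype T] (N : PetriNet P T) (p : P) : Finset T :=
  Finset.univ.filter fun t => 0 < N.pre p t

def transPre [Fintype P] (N : PetriNet P T) (t : T) : Finset P :=
  Finset.univ.filter fun p => 0 < N.pre p t

def transPost [Fintype P] (N : PetriNet P T) (t : T) : Finset P :=
  Finset.univ.filter fun p => 0 < N.post t p

def arc (N : PetriNet P T) : (P ⊕ T) → (P ⊕ T) → Prop
  | Sum.inl p, Sum.inr t => 0 < N.pre p t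
  | Sum.inr t, Sum.inl p => 0 < N.post t p
  | _, _ => False

def stronglyConnected (N : PetriNet P T) : Prop :=
  ∀ x y : P ⊕ T, Relation.ReflTransGen N.arc x y

def connectedNet (N : PetriNet P T) : Prop :=
  ∀ x y : P ⊕ T, Relation.ReflTransGen (fun a b => N.arc a b ∨ N.arc b a) x y

def ordinary (N : PetriNet P T) : Prop :=
  ∀ p t, N.pre p t ≤ 1 ∧ N.post t p ≤ 1

def isWMGle [Fintype T] (N : PetriNet P T) : Prop :=
  ∀ p, (N.placePre p).card ≤ 1 ∧ (N.placePost p).card ≤ 1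

def deadlock (N : PetriNet P T) (M : P → ℕ) : Prop :=
  ∀ t, ¬ N.enabled M t

end PetriNet




namespace PetriNet

section Aux

variable {P T : Type}

theorem rev_rev' (N : PetriNet P T) : N.rev.rev = N := rfl

theorem feasible_append' {N : PetriNet P T} {A B C : P → ℕ} {σ τ : List T}
    (h1 : N.feasible A σ B) (h2 : N.feasible B τ C) : N.feasible A (σ ++ τ) C := by
  induction σ generalizing A with
  | nil => simp only [feasible] at h1; subst h1; simpa using h2
  | cons t σ ih => exact ⟨h1.1, ih h1.2⟩

theorem rev_step' {N : PetriNet P T} {M : P → ℕ} {t : T} (h : N.enabled M t) :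
    N.rev.enabled (N.fire M t) t ∧ N.rev.fire (N.fire M t) t = M := by
  constructor
  · intro p; have := h p; simp only [rev, fire]; omega
  · funext p; have := h p; simp only [rev, fire]; omega

theorem feasible_rev' {N : PetriNet P T} {A B : P → ℕ} {σ : List T}
    (h : N.feasible A σ B) : N.rev.feasible B σ.reverse A := by
  induction σ generalizing A with
  | nil => simp only [feasible] at h ⊢; exact h.symm
  | cons t σ ih =>
    have hs := rev_step' h.1
    have h1 : N.rev.feasible B σ.reverse (N.fire A t) := ih h.2
    have h2 : N.rev.feasible (N.fire A t) [t] A := ⟨hs.1, hs.2.symm⟩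
    simpa using feasible_append' h1 h2

theorem parikh' {N : PetriNet P T} [Fintype T] [DecidableEq T] {A B : P → ℕ} {σ : List T}
    (h : N.feasible A σ B) (p : P) :
    (B p : ℤ) = (A p : ℤ) + ∑ s, N.inc p s * (σ.count s : ℤ) := by
  induction σ generalizing A with
  | nil => simp only [feasible] at h; simp [h]
  | cons t σ ih =>
    have h1 := h.1 p
    have h2 := ih h.2
    have hf : ((N.fire A t) p : ℤ) = (A p : ℤ) + N.inc p t := by
      simp only [fire, inc]; push_cast; omega
    rw [h2, hf]
    have hc : ∀ s : T, (((t :: σ).count s : ℕ) : ℤ)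
        = (σ.count s : ℤ) + (if s = t then 1 else 0) := by
      intro s
      by_cases hs : s = t <;> simp [hs, List.count_cons] <;> exact Ne.symm hs
    simp only [hc, mul_add]
    rw [Finset.sum_add_distrib]
    have h4 : ∑ s, N.inc p s * (if s = t then 1 else 0) = N.inc p t := by
      simp [mul_ite]
    rw [h4]; ring

theorem cycle_with' {N : PetriNet P T} {M : P → ℕ} (hl : N.live M) (hr : N.reversible M)
    (t : T) :
    ∃ σ A, N.feasible M σ A ∧ N.enabled A t ∧ ∃ τ, N.feasible (N.fire A t) τ M := by
  obtain ⟨A, ⟨σ, hσ⟩, hen⟩ := hl t M ⟨[], rfl⟩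
  have hreach : N.reachable M (N.fire A t) :=
    ⟨σ ++ [t], feasible_append' hσ ⟨hen, rfl⟩⟩
  obtain ⟨τ, hτ⟩ := hr _ hreach
  exact ⟨σ, A, hσ, hen, τ, hτ⟩

theorem potReach_rev_fire' {N : PetriNet P T} [Fintype T] {M0 A : P → ℕ} {t : T}
    (hA : N.potReach M0 A) (hl : N.live A) (hr : N.reversible A)
    (hen : N.rev.enabled A t) :
    N.potReach M0 (N.rev.fire A t) := by
  classical
  obtain ⟨σ, B, h1, h2, τ, h3⟩ := cycle_with' hl hr t
  set ρ := σ ++ t :: τ with hρdef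
  have hρ : N.feasible A ρ A := feasible_append' h1 ⟨h2, h3⟩
  have hcount : 1 ≤ ρ.count t := by
    have ht : t ∈ ρ := by simp [hρdef]
    exact List.count_pos_iff.2 ht
  have hcycle : ∀ p, ∑ s, N.inc p s * (ρ.count s : ℤ) = 0 := by
    intro p; have := parikh' hρ p; linarith
  obtain ⟨Z, hZ⟩ := hA
  refine ⟨fun s => Z s + ρ.count s - (if s = t then 1 else 0), fun p => ?_⟩
  have hfire : ((N.rev.fire A t) p : ℤ) = (A p : ℤ) - N.inc p t := by
    have := hen p
    simp only [rev, fire, inc] at *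
    push_cast; omega
  have hcast : ∀ s, ((Z s + ρ.count s - (if s = t then 1 else 0) : ℕ) : ℤ)
      = (Z s : ℤ) + (ρ.count s : ℤ) - (if s = t then 1 else 0) := by
    intro s
    by_cases hs : s = t
    · subst hs; rw [if_pos rfl, if_pos rfl]; omega
    · simp [hs]
  have hterm : ∀ s, N.inc p s * ((Z s + ρ.count s - (if s = t then 1 else 0) : ℕ) : ℤ)
      = N.inc p s * (Z s : ℤ) + N.inc p s * (ρ.count s : ℤ)
        - N.inc p s * (if s = t then 1 else 0) := by
    intro s; rw [hcast]; ring
  rw [hfire, hZ p]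
  simp only [hterm]
  rw [Finset.sum_sub_distrib, Finset.sum_add_distrib]
  have h4 : ∑ s, N.inc p s * (if s = t then 1 else 0) = N.inc p t := by
    simp [mul_ite]
  rw [h4, hcycle p]; ring

theorem potReach_of_revFeasible' {N : PetriNet P T} [Fintype T] {M0 : P → ℕ}
    (h : ∀ M, N.potReach M0 M → N.live M ∧ N.reversible M)
    {A B : P → ℕ} {σ : List T} (hA : N.potReach M0 A) (hf : N.rev.feasible A σ B) :
    N.potReach M0 B := by
  induction σ generalizing A with
  | nil => simp only [feasible] at hf; rwa [hf]
  | cons t σ ih =>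
    have hA' := potReach_rev_fire' hA (h A hA).1 (h A hA).2 hf.1
    exact ih hA' hf.2

end Aux

end PetriNet

/-- If every potentially reachable marking of `S` is live and reversible,
then the reverse system `-S` is live and reversible. -/
theorem stmt1 {P T : Type} [Fintype P] [Fintype T]
    (N : PetriNet P T) (M0 : P → ℕ)
    (h : ∀ M : P → ℕ, N.potReach M0 M → N.live M ∧ N.reversible M) :
    N.rev.live M0 ∧ N.rev.reversible M0 := by
  classical
  have hM0 : N.potReach M0 M0 := ⟨fun _ => 0, by simp⟩
  have key : ∀ M, N.rev.reachable M0 M → N.potReach M0 M := by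
    rintro M ⟨σ, hσ⟩
    exact PetriNet.potReach_of_revFeasible' h hM0 hσ
  constructor
  · intro t M hM
    obtain ⟨hl, hr⟩ := h M (key M hM)
    obtain ⟨σ, A, h1, h2, τ, h3⟩ := PetriNet.cycle_with' hl hr t
    exact ⟨N.fire A t, ⟨τ.reverse, PetriNet.feasible_rev' h3⟩, (PetriNet.rev_step' h2).1⟩
  · intro M hM
    obtain ⟨σ, hσ⟩ := hM
    have hNMM0 : N.reachable M M0 := by
      have := PetriNet.feasible_rev' hσ
      rw [PetriNet.rev_rev'] at this
      exact ⟨σ.reverse, this⟩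
    obtain ⟨τ, hτ⟩ := (h M (key M ⟨σ, hσ⟩)).2 M0 hNMM0
    exact ⟨τ.reverse, PetriNet.feasible_rev' hτ⟩
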